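/- Let H be a separable infinite-dimensional Hilbert space with orthonormal basis (ξ_n)_{n≥1}. For each n ≥ 2 let p_n be the orthogonal projection onto the closed span of {(1/n)ξ_1 + ξ_n, ξ_{n+1}, ξ_{n+2}, …}. Then: (a) p_n → 0 in the strong operator topology; (b) if (p_{n_k}) is any subsequence and (a_k) is any sequence of self-adjoint operators with ‖a_k‖ ≤ 1 and a_k ≥ p_{n_j} for all j ≥ k, then a_k ≥ p for all k, where p is the projection onto span{ξ_1}. In particular (p_n) does not order converge to 0 in the poset of self-adjoint contractions. -/

import Mathlib

/-- A net `x`, indexed by a set with relation `r`, *order converges* to `l` in a poset if it is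
squeezed between an increasing net with supremum `l` and a decreasing net with infimum `l`. -/
def OrderConvNet {ι P : Type*} (r : ι → ι → Prop) [Preorder P] (x : ι → P) (l : P) : Prop :=
  ∃ y z : ι → P,
    (∀ i j, r i j → y i ≤ y j) ∧ (∀ i j, r i j → z j ≤ z i) ∧
    (∀ i, y i ≤ x i ∧ x i ≤ z i) ∧
    IsLUB (Set.range y) l ∧ IsGLB (Set.range z) l

section Aux

open ContinuousLinearMap Filter

variable {H : Type*} [NormedAddCommGroup H] [InnerProductSpace ℂ H] [CompleteSpace H]


open ContinuousLinearMap in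
lemma aux_pos_apply_eq_zero {H : Type*} [NormedAddCommGroup H] [InnerProductSpace ℂ H]
    [CompleteSpace H] (T : H →L[ℂ] H) (hT : 0 ≤ T) (v : H)
    (h : Complex.re (inner ℂ (T v) v) = 0) : T v = 0 := by
  have hpos : T.IsPositive := by simpa using (ContinuousLinearMap.le_def 0 T).mp hT
  obtain ⟨s, hsa, -, hss⟩ :=
    CFC.exists_sqrt_of_isSelfAdjoint_of_quasispectrumRestricts hpos.isSelfAdjoint hpos.spectrumRestricts
  have hTv : T v = s (s v) := by rw [← hss]; rfl
  have h1 : (inner ℂ (T v) v : ℂ) = inner ℂ (s v) (s v) := by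
    rw [hTv]
    nth_rewrite 1 [← hsa.adjoint_eq]
    exact adjoint_inner_left s v (s v)
  have h2 : s v = 0 := by
    have hre : (inner ℂ (s v) (s v) : ℂ).re = ‖s v‖ ^ 2 := by
      rw [← RCLike.re_to_complex]
      exact inner_self_eq_norm_sq (𝕜 := ℂ) (s v)
    rw [h1, hre] at h
    have : ‖s v‖ = 0 := by nlinarith [norm_nonneg (s v)]
    simpa using this
  rw [hTv, h2, map_zero]

lemma aux_sq_re (r : ℝ) : ((r : ℂ) ^ 2).re = r ^ 2 := by
  rw [← Complex.ofReal_pow, Complex.ofReal_re]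

lemma aux_isPositive_of_re {T : H →L[ℂ] H} (hsa : IsSelfAdjoint T)
    (h : ∀ x, 0 ≤ (inner ℂ (T x) x : ℂ).re) : T.IsPositive := by
  refine isPositive_def'.mpr ⟨hsa, fun x => ?_⟩
  exact h x

lemma aux_re_nonneg_of_isPositive {T : H →L[ℂ] H} (hT : T.IsPositive) (x : H) :
    0 ≤ (inner ℂ (T x) x : ℂ).re := by
  have := hT.re_inner_nonneg_left x
  rwa [RCLike.re_to_complex] at this

lemma aux_range_fix {e : H →L[ℂ] H} (he : IsIdempotentElem e) {x : H}
    (hx : x ∈ LinearMap.range (e : H →ₗ[ℂ] H)) : e x = x := by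
  obtain ⟨y, rfl⟩ := hx
  show e (e y) = e y
  rw [← ContinuousLinearMap.mul_apply, he]

lemma aux_inner_proj {e : H →L[ℂ] H} (he : IsIdempotentElem e) (hsa : IsSelfAdjoint e) (v : H) :
    (inner ℂ (e v) v : ℂ) = (‖e v‖ : ℂ) ^ 2 := by
  have h1 : (inner ℂ (e v) (e v) : ℂ) = inner ℂ (e v) v := by
    have h2 : (inner ℂ ((adjoint e) (e v)) v : ℂ) = inner ℂ (e v) (e v) :=
      adjoint_inner_left e v (e v)
    rw [hsa.adjoint_eq] at h2
    rw [← h2, ← ContinuousLinearMap.mul_apply, he]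
  rw [← h1, inner_self_eq_norm_sq_to_K]
  norm_num
lemma aux_proj_nonneg {e : H →L[ℂ] H} (he : IsIdempotentElem e) (hsa : IsSelfAdjoint e) :
    0 ≤ e := by
  rw [ContinuousLinearMap.le_def, sub_zero]
  refine aux_isPositive_of_re hsa fun x => ?_
  rw [aux_inner_proj he hsa, aux_sq_re]
  positivity

lemma aux_proj_norm_le_one {e : H →L[ℂ] H} (he : IsIdempotentElem e) (hsa : IsSelfAdjoint e) :
    ‖e‖ ≤ 1 := by
  refine opNorm_le_bound e zero_le_one fun x => ?_
  rcases eq_or_ne (e x) 0 with h | h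
  · simp [h, norm_nonneg]
  · have h1 : (‖e x‖ : ℝ) ^ 2 = (inner ℂ (e x) x : ℂ).re := by
      rw [aux_inner_proj he hsa, aux_sq_re]
    have h2 : (inner ℂ (e x) x : ℂ).re ≤ ‖e x‖ * ‖x‖ := by
      calc (inner ℂ (e x) x : ℂ).re ≤ ‖(inner ℂ (e x) x : ℂ)‖ := Complex.re_le_norm _
        _ ≤ ‖e x‖ * ‖x‖ := norm_inner_le_norm _ _
    have h3 : 0 < ‖e x‖ := norm_pos_iff.mpr h
    nlinarith

lemma aux_sa_le_one {a : H →L[ℂ] H} (hsa : IsSelfAdjoint a) (hn : ‖a‖ ≤ 1) : a ≤ 1 := by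
  rw [ContinuousLinearMap.le_def]
  refine aux_isPositive_of_re ((IsSelfAdjoint.one (R := H →L[ℂ] H)).sub hsa) fun x => ?_
  have h1 : ((1 - a : H →L[ℂ] H) x : H) = x - a x := rfl
  have h2 : (inner ℂ (x - a x) x : ℂ).re = ‖x‖ ^ 2 - (inner ℂ (a x) x : ℂ).re := by
    rw [inner_sub_left]
    have : (inner ℂ x x : ℂ) = (‖x‖ : ℂ) ^ 2 := by rw [inner_self_eq_norm_sq_to_K]; norm_num
    simp [this, ← Complex.ofReal_pow]
  have h3 : (inner ℂ (a x) x : ℂ).re ≤ ‖x‖ ^ 2 := by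
    calc (inner ℂ (a x) x : ℂ).re ≤ ‖(inner ℂ (a x) x : ℂ)‖ := Complex.re_le_norm _
      _ ≤ ‖a x‖ * ‖x‖ := norm_inner_le_norm _ _
      _ ≤ (‖a‖ * ‖x‖) * ‖x‖ := by
          have := a.le_opNorm x
          have h0 : (0:ℝ) ≤ ‖x‖ := norm_nonneg x
          nlinarith
      _ ≤ ‖x‖ ^ 2 := by nlinarith [norm_nonneg x, norm_nonneg a]
  rw [h1, h2]
  linarith

lemma aux_fix_of_le {a e : H →L[ℂ] H} (hsa : IsSelfAdjoint a) (hn : ‖a‖ ≤ 1)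
    (he : IsIdempotentElem e) (hle : e ≤ a) {x : H}
    (hx : x ∈ LinearMap.range (e : H →ₗ[ℂ] H)) : a x = x := by
  have hex : e x = x := aux_range_fix he hx
  have h1 : a ≤ 1 := aux_sa_le_one hsa hn
  have h2 : 0 ≤ ((inner ℂ ((a - e) x) x : ℂ)).re :=
    aux_re_nonneg_of_isPositive ((ContinuousLinearMap.le_def e a).mp hle) x
  have h3 : 0 ≤ (inner ℂ (((1 : H →L[ℂ] H) - a) x) x : ℂ).re :=
    aux_re_nonneg_of_isPositive ((ContinuousLinearMap.le_def a 1).mp h1) x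
  have hsum : ((inner ℂ ((a - e) x) x : ℂ)) + (inner ℂ (((1 : H →L[ℂ] H) - a) x) x : ℂ) = 0 := by
    rw [← inner_add_left]
    have hz : ((a - e) x) + (((1 : H →L[ℂ] H) - a) x) = 0 := by
      simp only [ContinuousLinearMap.sub_apply, ContinuousLinearMap.one_apply, hex]
      abel
    rw [hz, inner_zero_left]
  have h4 : (inner ℂ (((1 : H →L[ℂ] H) - a) x) x : ℂ).re = 0 := by
    have := congrArg Complex.re hsum
    simp only [Complex.add_re, Complex.zero_re] at this
    linarith
  have h5 : ((1 : H →L[ℂ] H) - a) x = 0 := by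
    refine aux_pos_apply_eq_zero _ ?_ x h4
    rw [ContinuousLinearMap.le_def, sub_zero]
    exact (ContinuousLinearMap.le_def a 1).mp h1
  have h6 : x - a x = 0 := by
    rw [← h5]; rfl
  have := sub_eq_zero.mp h6
  exact this.symm

lemma aux_partb (b : HilbertBasis ℕ ℂ H) (p : ℕ → H →L[ℂ] H)
    (hproj : ∀ n, 2 ≤ n → IsIdempotentElem (p n) ∧ IsSelfAdjoint (p n))
    (hrange : ∀ n, 2 ≤ n → LinearMap.range ((p n : H →ₗ[ℂ] H)) =
      (Submodule.span ℂ ({((n : ℂ))⁻¹ • b 1 + b n} ∪ {x | ∃ m, n < m ∧ x = b m})).topologicalClosure)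
    (q : H →L[ℂ] H) (hqidem : IsIdempotentElem q) (hqsa : IsSelfAdjoint q)
    (hqrange : LinearMap.range ((q : H →ₗ[ℂ] H)) = Submodule.span ℂ {b 1})
    (n : ℕ → ℕ) (hmono : StrictMono n) (hn2 : ∀ k, 2 ≤ n k)
    (a : ℕ → H →L[ℂ] H) (ha : ∀ k, IsSelfAdjoint (a k) ∧ ‖a k‖ ≤ 1)
    (hle : ∀ k j, k ≤ j → p (n j) ≤ a k) : ∀ k, q ≤ a k := by
  intro k
  have hAsa := (ha k).1
  have hb1n : (inner ℂ (b 1) (b 1) : ℂ) = 1 := by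
    rw [inner_self_eq_norm_sq_to_K, b.orthonormal.1 1]
    norm_num
  have hfix : ∀ j, k ≤ j → ∀ x, x ∈ LinearMap.range ((p (n j)) : H →ₗ[ℂ] H) → (a k) x = x :=
    fun j hj x hx => aux_fix_of_le hAsa (ha k).2 (hproj _ (hn2 j)).1 (hle k j hj) hx
  set N : ℕ := n (k + 1) with hN
  have hNne : ((N : ℂ)) ≠ 0 := by
    have := hn2 (k + 1)
    simp only [hN, Nat.cast_ne_zero]
    omega
  have hmem1 : ((N : ℂ))⁻¹ • b 1 + b N ∈ LinearMap.range ((p N) : H →ₗ[ℂ] H) := by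
    rw [hrange _ (hn2 (k+1))]
    exact Submodule.le_topologicalClosure _ (Submodule.subset_span (Set.mem_union_left _ rfl))
  have hmem2 : b N ∈ LinearMap.range ((p (n k)) : H →ₗ[ℂ] H) := by
    rw [hrange _ (hn2 k)]
    exact Submodule.le_topologicalClosure _
      (Submodule.subset_span (Set.mem_union_right _ ⟨N, hmono (Nat.lt_succ_self k), rfl⟩))
  have h1 := hfix (k+1) (Nat.le_succ k) _ hmem1
  have h2 := hfix k le_rfl _ hmem2
  have hab1 : a k (b 1) = b 1 := by
    have hrepr : b 1 = (N : ℂ) • (((N : ℂ))⁻¹ • b 1 + b N) - (N : ℂ) • b N := by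
      rw [smul_add, smul_inv_smul₀ hNne]
      abel
    rw [hrepr, map_sub, map_smul, map_smul, h1, h2]
  -- q formula
  have hq1 : q (b 1) = b 1 :=
    aux_range_fix hqidem (by rw [hqrange]; exact Submodule.mem_span_singleton_self _)
  have hqv : ∀ v, q v = (inner ℂ (b 1) v : ℂ) • b 1 := by
    intro v
    have hv : q v ∈ Submodule.span ℂ {b 1} := by
      rw [← hqrange]; exact LinearMap.mem_range_self _ v
    obtain ⟨c, hc⟩ := Submodule.mem_span_singleton.mp hv
    have hcval : (inner ℂ (b 1) (q v) : ℂ) = c := by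
      rw [← hc, inner_smul_right, hb1n, mul_one]
    have hqadj : (inner ℂ (b 1) (q v) : ℂ) = inner ℂ (b 1) v := by
      have h := adjoint_inner_left q v (b 1)
      rw [hqsa.adjoint_eq, hq1] at h
      exact h.symm
    rw [← hc, ← hcval, hqadj]
  -- positivity
  have hapos : (0 : H →L[ℂ] H) ≤ a k :=
    le_trans (aux_proj_nonneg (hproj _ (hn2 k)).1 (hproj _ (hn2 k)).2) (hle k k le_rfl)
  rw [ContinuousLinearMap.le_def]
  refine aux_isPositive_of_re (hAsa.sub hqsa) fun v => ?_
  set c : ℂ := inner ℂ (b 1) v with hcdef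
  set w : H := v - c • b 1 with hwdef
  have hw : (inner ℂ (b 1) w : ℂ) = 0 := by
    rw [hwdef, inner_sub_right, inner_smul_right, hb1n, mul_one, ← hcdef, sub_self]
  have haw : (inner ℂ (b 1) (a k w) : ℂ) = 0 := by
    have h := adjoint_inner_left (a k) w (b 1)
    rw [hAsa.adjoint_eq, hab1] at h
    rw [← h, hw]
  have happ : (a k - q) v = a k w := by
    have hv : v = w + c • b 1 := by rw [hwdef]; abel
    rw [ContinuousLinearMap.sub_apply, hqv v, ← hcdef]
    nth_rewrite 1 [hv]
    rw [map_add, map_smul, hab1]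
    abel
  rw [happ]
  have hinner : (inner ℂ (a k w) v : ℂ) = inner ℂ (a k w) w := by
    have hv : v = w + c • b 1 := by rw [hwdef]; abel
    nth_rewrite 1 [hv]
    rw [inner_add_right, inner_smul_right]
    have : (inner ℂ (a k w) (b 1) : ℂ) = 0 := by
      rw [← inner_conj_symm, haw, map_zero]
    rw [this, mul_zero, add_zero]
  rw [hinner]
  exact aux_re_nonneg_of_isPositive (by simpa using (ContinuousLinearMap.le_def 0 (a k)).mp hapos) w

set_option maxHeartbeats 1000000 in
lemma aux_parta (b : HilbertBasis ℕ ℂ H) (p : ℕ → H →L[ℂ] H)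
    (hproj : ∀ n, 2 ≤ n → IsIdempotentElem (p n) ∧ IsSelfAdjoint (p n))
    (hrange : ∀ n, 2 ≤ n → LinearMap.range ((p n : H →ₗ[ℂ] H)) =
      (Submodule.span ℂ ({((n : ℂ))⁻¹ • b 1 + b n} ∪ {x | ∃ m, n < m ∧ x = b m})).topologicalClosure)
    (v : H) : Tendsto (fun n => p n v) atTop (nhds 0) := by
  have hb1n : (inner ℂ (b 1) (b 1) : ℂ) = 1 := by
    rw [inner_self_eq_norm_sq_to_K, b.orthonormal.1 1]; norm_num
  set S : ℕ → H := fun n => ∑ m ∈ Finset.range n, (inner ℂ (b m) v : ℂ) • b m with hS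
  have hSt : Tendsto S atTop (nhds v) := by
    have h := (b.hasSum_repr v).tendsto_sum_nat
    have he : ∀ n, S n = ∑ m ∈ Finset.range n, b.repr v m • b m := by
      intro n
      exact Finset.sum_congr rfl fun m _ => by rw [b.repr_apply_apply]
    simpa [funext he] using h
  set t : ℕ → ℝ := fun n => ‖v - S n‖ with ht
  have htt : Tendsto t atTop (nhds 0) := by
    have h1 : Tendsto (fun n => v - S n) atTop (nhds (v - v)) := tendsto_const_nhds.sub hSt
    rw [sub_self] at h1
    simpa [ht] using h1.norm
  set c1 : ℝ := ‖(inner ℂ (b 1) v : ℂ)‖ with hc1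
  set B : ℕ → ℝ := fun n => c1 * (n:ℝ)⁻¹ + 2 * t n with hB
  have hBt : Tendsto B atTop (nhds 0) := by
    have h1 : Tendsto (fun n : ℕ => (n:ℝ)⁻¹) atTop (nhds 0) :=
      tendsto_inv_atTop_nhds_zero_nat
    have h2 := (h1.const_mul c1).add (htt.const_mul 2)
    simpa using h2
  refine squeeze_zero_norm' ?_ hBt
  filter_upwards [eventually_ge_atTop 2] with n hn
  obtain ⟨hpi, hps⟩ := hproj n hn
  set e : H := ((n : ℂ))⁻¹ • b 1 + b n with hedef
  set T : Set H := {x | ∃ m, n < m ∧ x = b m} with hT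
  set u : H := p n v with hu_def
  have hnR : (0:ℝ) < (n:ℝ) := by exact_mod_cast Nat.lt_of_lt_of_le Nat.zero_lt_two hn
  have hu : u ∈ closure ((Submodule.span ℂ ({e} ∪ T) : Submodule ℂ H) : Set H) := by
    have h1 : u ∈ LinearMap.range ((p n : H →ₗ[ℂ] H)) := LinearMap.mem_range_self _ v
    rw [hrange n hn] at h1
    rw [← Submodule.topologicalClosure_coe]
    exact h1
  -- Claim A
  have claimA : ∀ m, m < n → m ≠ 1 → (inner ℂ (b m) u : ℂ) = 0 := by
    intro m hm hm1
    have hsub : Submodule.span ℂ ({e} ∪ T) ≤ LinearMap.ker ((innerSL ℂ (b m) : H →ₗ[ℂ] ℂ)) := by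
      rw [Submodule.span_le]
      rintro x (rfl | ⟨m', hm', rfl⟩)
      · simp only [SetLike.mem_coe, LinearMap.mem_ker, ContinuousLinearMap.coe_coe, innerSL_apply_apply]
        simp [hedef, inner_add_right, inner_smul_right,
          b.orthonormal.2 (show m ≠ 1 from hm1), b.orthonormal.2 (show m ≠ n by omega)]
      · simp only [SetLike.mem_coe, LinearMap.mem_ker]
        simp [b.orthonormal.2 (show m ≠ m' by omega)]
    have hclosed : IsClosed {x : H | (inner ℂ (b m) x : ℂ) = 0} :=
      isClosed_eq (continuous_const.inner continuous_id) continuous_const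
    have := closure_minimal (fun x hx => by
      have h2 := hsub hx
      simpa [LinearMap.mem_ker] using h2) hclosed hu
    exact this
  -- Claim B
  have claimB : ‖(inner ℂ (b 1) u : ℂ)‖ * n ≤ ‖u‖ := by
    have hclosed : IsClosed {x : H | ‖(inner ℂ (b 1) x : ℂ)‖ * n ≤ ‖x‖} :=
      isClosed_le (((continuous_const.inner continuous_id).norm).mul continuous_const)
        continuous_norm
    refine closure_minimal ?_ hclosed hu
    intro x hx
    rw [Set.singleton_union] at hx
    obtain ⟨α, w, hwT, rfl⟩ := Submodule.mem_span_insert.mp (SetLike.mem_coe.mp hx)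
    have hwm : ∀ m, m ≤ n → (inner ℂ (b m) w : ℂ) = 0 := by
      intro m hm
      have hsub : Submodule.span ℂ T ≤ LinearMap.ker ((innerSL ℂ (b m) : H →ₗ[ℂ] ℂ)) := by
        rw [Submodule.span_le]
        rintro x ⟨m', hm', rfl⟩
        simp only [SetLike.mem_coe, LinearMap.mem_ker]
        simp [b.orthonormal.2 (show m ≠ m' by omega)]
      simpa [LinearMap.mem_ker] using hsub hwT
    have hew : (inner ℂ e w : ℂ) = 0 := by
      rw [hedef, inner_add_left, inner_smul_left, hwm 1 (by omega), hwm n le_rfl, mul_zero,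
        add_zero]
    have hb1e : (inner ℂ (b 1) e : ℂ) = (n:ℂ)⁻¹ := by
      rw [hedef, inner_add_right, inner_smul_right, hb1n, mul_one,
        b.orthonormal.2 (show 1 ≠ n by omega), add_zero]
    have hb1x : (inner ℂ (b 1) (α • e + w) : ℂ) = α * (n:ℂ)⁻¹ := by
      rw [inner_add_right, inner_smul_right, hb1e, hwm 1 (by omega), add_zero]
    have hnorm2 : ‖α • e + w‖ * ‖α • e + w‖ = ‖α • e‖ * ‖α • e‖ + ‖w‖ * ‖w‖ :=
      norm_add_sq_eq_norm_sq_add_norm_sq_of_inner_eq_zero (𝕜 := ℂ) _ _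
        (by rw [inner_smul_left, hew, mul_zero])
    have henorm : 1 ≤ ‖e‖ * ‖e‖ := by
      have h1 : ‖e‖ * ‖e‖ = ‖((n:ℂ))⁻¹ • b 1‖ * ‖((n:ℂ))⁻¹ • b 1‖ + ‖b n‖ * ‖b n‖ := by
        rw [hedef]
        exact norm_add_sq_eq_norm_sq_add_norm_sq_of_inner_eq_zero (𝕜 := ℂ) _ _
          (by rw [inner_smul_left, b.orthonormal.2 (show 1 ≠ n by omega), mul_zero])
      have h2 : ‖b n‖ = 1 := b.orthonormal.1 n
      nlinarith [mul_self_nonneg ‖((n:ℂ))⁻¹ • b 1‖]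
    have halpha : ‖α‖ ≤ ‖α • e + w‖ := by
      have h1 : ‖α • e‖ * ‖α • e‖ = (‖α‖ * ‖α‖) * (‖e‖ * ‖e‖) := by rw [norm_smul]; ring
      nlinarith [norm_nonneg (α • e + w), norm_nonneg w, norm_nonneg α, mul_self_nonneg ‖w‖]
    show ‖(inner ℂ (b 1) (α • e + w) : ℂ)‖ * n ≤ ‖α • e + w‖
    rw [hb1x, norm_mul]
    have h3 : ‖((n:ℂ))⁻¹‖ = ((n:ℝ))⁻¹ := by
      rw [norm_inv, Complex.norm_natCast]
    rw [h3]
    have h4 : ‖α‖ * ((n:ℝ))⁻¹ * (n:ℝ) = ‖α‖ := by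
      field_simp
    rw [h4]
    exact halpha
  -- final estimate
  set cu : ℂ := inner ℂ (b 1) u with hcu_def
  set u₂ : H := u - cu • b 1 with hu2_def
  have hcu : ‖cu‖ * n ≤ ‖u‖ := claimB
  have hcu' : ‖cu‖ ≤ ‖u‖ * ((n:ℝ))⁻¹ := by
    have h0 : (0:ℝ) ≤ ((n:ℝ))⁻¹ := by positivity
    calc ‖cu‖ = ‖cu‖ * (n:ℝ) * ((n:ℝ))⁻¹ := by field_simp
      _ ≤ ‖u‖ * ((n:ℝ))⁻¹ := mul_le_mul_of_nonneg_right hcu h0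
  have hu2n : ‖u₂‖ ≤ 2 * ‖u‖ := by
    have h1 : ‖cu • b 1‖ = ‖cu‖ := by
      rw [norm_smul, b.orthonormal.1 1, mul_one]
    have h2 : ‖cu‖ ≤ ‖u‖ := by
      have hn1 : (1:ℝ) ≤ (n:ℝ) := by exact_mod_cast Nat.one_le_of_lt hn
      nlinarith [norm_nonneg cu]
    calc ‖u₂‖ ≤ ‖u‖ + ‖cu • b 1‖ := norm_sub_le _ _
      _ ≤ 2 * ‖u‖ := by rw [h1]; linarith
  have hu2m : ∀ m, m < n → (inner ℂ (b m) u₂ : ℂ) = 0 := by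
    intro m hm
    rcases eq_or_ne m 1 with rfl | hm1
    · rw [hu2_def, inner_sub_right, inner_smul_right, hb1n, mul_one, ← hcu_def, sub_self]
    · rw [hu2_def, inner_sub_right, inner_smul_right, b.orthonormal.2 hm1, mul_zero, sub_zero]
      exact claimA m hm hm1
  have hu2S : (inner ℂ u₂ (S n) : ℂ) = 0 := by
    rw [hS]
    simp only
    rw [inner_sum]
    refine Finset.sum_eq_zero fun m hm => ?_
    rw [inner_smul_right]
    have h1 : (inner ℂ u₂ (b m) : ℂ) = 0 := by
      rw [← inner_conj_symm, hu2m m (Finset.mem_range.mp hm), map_zero]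
    rw [h1, mul_zero]
  have hkey : (inner ℂ u₂ v : ℂ) = inner ℂ u₂ (v - S n) := by
    rw [inner_sub_right, hu2S, sub_zero]
  have huv : (inner ℂ u v : ℂ) = ((‖u‖ : ℂ)) ^ 2 := aux_inner_proj hpi hps v
  have hsplit : (inner ℂ u v : ℂ) = inner ℂ u₂ v + (starRingEnd ℂ cu) * (inner ℂ (b 1) v) := by
    have h1 : u = u₂ + cu • b 1 := by rw [hu2_def]; abel
    nth_rewrite 1 [h1]
    rw [inner_add_left, inner_smul_left]
  have h1n : ‖(inner ℂ u v : ℂ)‖ = ‖u‖^2 := by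
    rw [huv, norm_pow, Complex.norm_real, Real.norm_eq_abs, abs_of_nonneg (norm_nonneg u)]
  have h2n : ‖(inner ℂ u v : ℂ)‖ ≤ ‖u₂‖ * t n + ‖cu‖ * c1 := by
    rw [hsplit]
    refine (norm_add_le _ _).trans ?_
    have ha : ‖(inner ℂ u₂ v : ℂ)‖ ≤ ‖u₂‖ * t n := by
      rw [hkey]
      exact norm_inner_le_norm _ _
    have hb : ‖(starRingEnd ℂ cu) * (inner ℂ (b 1) v : ℂ)‖ = ‖cu‖ * c1 := by
      rw [norm_mul, RCLike.norm_conj, hc1]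
    rw [hb]
    linarith
  have hfin : ‖u‖^2 ≤ ‖u‖ * B n := by
    have := h2n
    rw [h1n] at this
    calc ‖u‖^2 ≤ ‖u₂‖ * t n + ‖cu‖ * c1 := this
      _ ≤ (2*‖u‖) * t n + (‖u‖ * ((n:ℝ))⁻¹) * c1 := by
          have ht0 : 0 ≤ t n := norm_nonneg _
          have hc0 : 0 ≤ c1 := norm_nonneg _
          nlinarith
      _ = ‖u‖ * B n := by rw [hB]; ring
  rcases eq_or_lt_of_le (norm_nonneg u) with h0 | h0
  · rw [← h0]
    have ht0 : 0 ≤ t n := norm_nonneg _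
    have hc0 : 0 ≤ c1 := norm_nonneg _
    have : (0:ℝ) ≤ ((n:ℝ))⁻¹ := by positivity
    rw [hB]
    positivity
  · nlinarith [hfin]

end Aux

open ContinuousLinearMap in
/-- For the projections `p n` onto the closed span of `{(1/n)ξ₁ + ξ_n, ξ_{n+1}, …}` (with
`(ξ_n)` an orthonormal basis of a separable Hilbert space): (a) `p n → 0` strongly;
(b) any sequence of self-adjoint contractions `a k` with `a k ≥ p (n j)` for all `j ≥ k`
(for a subsequence `n`) dominates the projection `q` onto `span {ξ₁}`; and consequently
(c) `(p n)` does not order converge to `0` in the poset of self-adjoint contractions. -/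

theorem stmt15 {H : Type*} [NormedAddCommGroup H] [InnerProductSpace ℂ H] [CompleteSpace H]
    (b : HilbertBasis ℕ ℂ H) (p : ℕ → H →L[ℂ] H)
    (hproj : ∀ n, 2 ≤ n → IsIdempotentElem (p n) ∧ IsSelfAdjoint (p n))
    (hnorm : ∀ n, 2 ≤ n → ‖p n‖ ≤ 1)
    (hrange : ∀ n, 2 ≤ n → LinearMap.range ((p n : H →ₗ[ℂ] H)) =
      (Submodule.span ℂ ({((n : ℂ))⁻¹ • b 1 + b n} ∪ {x | ∃ m, n < m ∧ x = b m})).topologicalClosure)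
    (q : H →L[ℂ] H) (hqidem : IsIdempotentElem q) (hqsa : IsSelfAdjoint q)
    (hqrange : LinearMap.range ((q : H →ₗ[ℂ] H)) = Submodule.span ℂ {b 1}) :
    (∀ v : H, Filter.Tendsto (fun n => p n v) Filter.atTop (nhds 0)) ∧
    (∀ n : ℕ → ℕ, StrictMono n → (∀ k, 2 ≤ n k) →
      ∀ a : ℕ → H →L[ℂ] H, (∀ k, IsSelfAdjoint (a k) ∧ ‖a k‖ ≤ 1) →
        (∀ k j, k ≤ j → p (n j) ≤ a k) → ∀ k, q ≤ a k) ∧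
    ¬ OrderConvNet (· ≤ · : ℕ → ℕ → Prop)
      (fun k => (⟨p (k + 2), (hproj (k + 2) (by omega)).2, hnorm (k + 2) (by omega)⟩ :
        {a : H →L[ℂ] H // IsSelfAdjoint a ∧ ‖a‖ ≤ 1}))
      ⟨0, by constructor <;> simp [IsSelfAdjoint]⟩ := by
  refine ⟨fun v => aux_parta b p hproj hrange v,
    fun n hm h2 a ha hle => aux_partb b p hproj hrange q hqidem hqsa hqrange n hm h2 a ha hle, ?_⟩
  rintro ⟨y, z, hy, hz, hyz, hlub, hglb⟩
  have hble : ∀ k j, k ≤ j → p (j + 2) ≤ ((z k : {a : H →L[ℂ] H // IsSelfAdjoint a ∧ ‖a‖ ≤ 1}) :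
      H →L[ℂ] H) := by
    intro k j hkj
    have h1 := Subtype.coe_le_coe.mpr (hyz j).2
    have h2 := Subtype.coe_le_coe.mpr (hz k j hkj)
    exact le_trans h1 h2
  have hq : ∀ k, q ≤ ((z k : {a : H →L[ℂ] H // IsSelfAdjoint a ∧ ‖a‖ ≤ 1}) : H →L[ℂ] H) :=
    aux_partb b p hproj hrange q hqidem hqsa hqrange (fun j => j + 2)
      (fun _ _ h => Nat.add_lt_add_right h 2) (fun x => by show 2 ≤ x + 2; omega)
      (fun k => ((z k : {a : H →L[ℂ] H // IsSelfAdjoint a ∧ ‖a‖ ≤ 1}) : H →L[ℂ] H))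
      (fun k => (z k).2) hble
  have hqn : ‖q‖ ≤ 1 := aux_proj_norm_le_one hqidem hqsa
  have hlb : (⟨q, hqsa, hqn⟩ : {a : H →L[ℂ] H // IsSelfAdjoint a ∧ ‖a‖ ≤ 1}) ∈
      lowerBounds (Set.range z) := by
    rintro w ⟨k, rfl⟩
    exact Subtype.coe_le_coe.mp (hq k)
  have hle0 : q ≤ (0 : H →L[ℂ] H) := Subtype.coe_le_coe.mpr (hglb.2 hlb)
  have hq1 : q (b 1) = b 1 :=
    aux_range_fix hqidem (by rw [hqrange]; exact Submodule.mem_span_singleton_self _)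
  have hpos := aux_re_nonneg_of_isPositive ((ContinuousLinearMap.le_def q 0).mp hle0) (b 1)
  have hz0 : ((0 - q : H →L[ℂ] H) (b 1)) = -(b 1) := by
    rw [ContinuousLinearMap.sub_apply, ContinuousLinearMap.zero_apply, hq1, zero_sub]
  have hb1n : (inner ℂ (b 1) (b 1) : ℂ) = 1 := by
    rw [inner_self_eq_norm_sq_to_K, b.orthonormal.1 1]; norm_num
  rw [hz0, inner_neg_left, hb1n] at hpos
  norm_num at hpos
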